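/- For m = 2^v d with v ≥ 1 and d odd, the complete multipartite graph K_{m×2} admits a 1-factorization with the abelian group C_m × Z_2 as an automorphism group acting sharply transitively on the vertex set. -/

import Mathlib

open SimpleGraph

/-- The complete multipartite graph `K_{m×n}` with `m` parts each of size `n`:
two vertices are adjacent iff they lie in different parts. -/
def completeMultipartite (m n : ℕ) : SimpleGraph (Fin m × Fin n) where
  Adj u v := u.1 ≠ v.1
  symm := ⟨fun _ _ h => Ne.symm h⟩
  loopless := ⟨fun _ h => h rfl⟩

/-- `M` is a 1-factor (perfect matching) of `Γ`: a set of edges of `Γ` such that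
every vertex lies in exactly one edge of `M`. -/
def IsOneFactor {V : Type*} (Γ : SimpleGraph V) (M : Set (Sym2 V)) : Prop :=
  M ⊆ Γ.edgeSet ∧ ∀ v : V, ∃! e : Sym2 V, e ∈ M ∧ v ∈ e

/-- `F` is a 1-factorization of `Γ`: a collection of 1-factors such that every
edge of `Γ` lies in exactly one member of `F`. -/
def IsOneFactorization {V : Type*} (Γ : SimpleGraph V) (F : Set (Set (Sym2 V))) : Prop :=
  (∀ M ∈ F, IsOneFactor Γ M) ∧ ∀ e ∈ Γ.edgeSet, ∃! M : Set (Sym2 V), M ∈ F ∧ e ∈ M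

/-- The 1-factorization `F` of `Γ` admits the group `A`, acting on the vertices via `φ`,
as a group of automorphisms mapping factors to factors and acting sharply transitively
on the vertices. -/
def IsSharplyTransitiveOneFactorization {V : Type*} (Γ : SimpleGraph V)
    (A : Type*) [Group A] (φ : A →* Equiv.Perm V) (F : Set (Set (Sym2 V))) : Prop :=
  IsOneFactorization Γ F ∧
  (∀ a : A, ∀ u v : V, Γ.Adj (φ a u) (φ a v) ↔ Γ.Adj u v) ∧
  (∀ a : A, ∀ M ∈ F, Sym2.map (φ a) '' M ∈ F) ∧
  (∀ u v : V, ∃! a : A, φ a u = v)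

/-- `Γ` admits a 1-factorization with `A` as an automorphism group acting sharply
transitively on the vertex set. -/
def HasRegularOneFactorization {V : Type*} (Γ : SimpleGraph V) (A : Type*) [Group A] : Prop :=
  ∃ (φ : A →* Equiv.Perm V) (F : Set (Set (Sym2 V))),
    IsSharplyTransitiveOneFactorization Γ A φ F

namespace AOFB

abbrev V (m : ℕ) := ZMod m × ZMod 2

def graph (m : ℕ) : SimpleGraph (V m) where
  Adj u v := u.1 ≠ v.1
  symm := ⟨fun _ _ h => Ne.symm h⟩
  loopless := ⟨fun _ h => h rfl⟩

def h0 (m : ℕ) : ZMod m := (m / 2 : ℕ)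

/-- the color of an (ordered) edge -/
def colFun (m : ℕ) (u v : V m) : ZMod m ⊕ ZMod m :=
  if u.2 = v.2 then Sum.inl (u.1 + v.1)
  else if (v.1 - u.1 = h0 m ∨ u.1 - v.1 = h0 m) then Sum.inl (u.1 + v.1 + h0 m)
  else if u.2 = 0 then Sum.inr (v.1 - u.1) else Sum.inr (u.1 - v.1)

lemma zmod2_ne {a b : ZMod 2} (h : a ≠ b) : b = a + 1 := by revert a b; decide

lemma zmod2_cases (a : ZMod 2) : a = 0 ∨ a = 1 := by revert a; decide

lemma zmod2_ne_add_one (a : ZMod 2) : a ≠ a + 1 := by revert a; decide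
lemma zmod2_zero_ne_one : (0 : ZMod 2) ≠ 1 := by decide
lemma zmod2_one_ne_zero : (1 : ZMod 2) ≠ 0 := by decide

lemma colFun_symm (m : ℕ) (u v : V m) : colFun m u v = colFun m v u := by
  unfold colFun
  by_cases h1 : u.2 = v.2
  · rw [if_pos h1, if_pos h1.symm, add_comm]
  · rw [if_neg h1, if_neg (show ¬v.2 = u.2 from fun hh => h1 hh.symm)]
    by_cases h2 : v.1 - u.1 = h0 m ∨ u.1 - v.1 = h0 m
    · rw [if_pos h2, if_pos h2.symm, add_comm u.1 v.1]
    · rw [if_neg h2, if_neg (show ¬(u.1 - v.1 = h0 m ∨ v.1 - u.1 = h0 m) from fun hh => h2 hh.symm)]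
      by_cases h3 : u.2 = 0
      · rw [if_pos h3, if_neg (fun hv => h1 (h3.trans hv.symm))]
      · have hv : v.2 = 0 := by
          rcases zmod2_cases v.2 with h | h
          · exact h
          · rcases zmod2_cases u.2 with h' | h'
            · exact absurd h' h3
            · exact absurd (h'.trans h.symm) h1
        rw [if_neg h3, if_pos hv]

def col (m : ℕ) : Sym2 (V m) → ZMod m ⊕ ZMod m :=
  Sym2.lift ⟨colFun m, colFun_symm m⟩

@[simp] lemma col_mk (m : ℕ) (u v : V m) : col m s(u, v) = colFun m u v :=
  Sym2.lift_mk _ u v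

def cls (m : ℕ) (c : ZMod m ⊕ ZMod m) : Set (Sym2 (V m)) :=
  {e | e ∈ (graph m).edgeSet ∧ col m e = c}

lemma h0_add_h0 {m : ℕ} (hm : Even m) : h0 m + h0 m = 0 := by
  have h : (m / 2 + m / 2 : ℕ) = m := by rcases hm with ⟨k, hk⟩; omega
  rw [h0, ← Nat.cast_add, h, ZMod.natCast_self]

lemma neg_h0 {m : ℕ} (hm : Even m) : -h0 m = h0 m := by
  rw [neg_eq_iff_add_eq_zero, h0_add_h0 hm]

lemma h0_ne_zero {m : ℕ} (hm : Even m) (hpos : 0 < m) : h0 m ≠ 0 := by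
  rw [h0, Ne, ZMod.natCast_eq_zero_iff]
  intro hdvd
  rcases hm with ⟨k, hk⟩
  have h2 : m / 2 = k := by omega
  have := Nat.le_of_dvd (by omega) hdvd
  omega

lemma mem_cls_iff {m : ℕ} {c} {e : Sym2 (V m)} :
    e ∈ cls m c ↔ e ∈ (graph m).edgeSet ∧ col m e = c := Iff.rfl

lemma adj_iff {m : ℕ} {u v : V m} : (graph m).Adj u v ↔ u.1 ≠ v.1 := Iff.rfl

lemma matching {m : ℕ} (hm : Even m) (hpos : 0 < m) (c : ZMod m ⊕ ZMod m)
    (hc : ∀ s, c = Sum.inr s → s ≠ 0 ∧ s ≠ h0 m) (u : V m) :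
    ∃! e : Sym2 (V m), e ∈ cls m c ∧ u ∈ e := by
  rcases c with w | s
  · by_cases hx : u.1 + u.1 = w
    · -- partner (u.1 + h0, u.2 + 1)
      refine ⟨s(u, (u.1 + h0 m, u.2 + 1)), ⟨⟨?_, ?_⟩, Sym2.mem_mk_left _ _⟩, ?_⟩
      · rw [SimpleGraph.mem_edgeSet, adj_iff]
        intro h
        exact h0_ne_zero hm hpos (by linear_combination -h)
      · rw [col_mk, colFun, if_neg (show ¬u.2 = (u.1 + h0 m, u.2 + 1).2 from zmod2_ne_add_one u.2),
          if_pos (Or.inl (show (u.1 + h0 m, u.2 + 1).1 - u.1 = h0 m by ring))]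
        have hval : u.1 + (u.1 + h0 m, u.2 + 1).1 + h0 m = w := by
          have h2 : u.1 + (u.1 + h0 m) + h0 m = (u.1 + u.1) + (h0 m + h0 m) := by ring
          rw [show (u.1 + h0 m, u.2 + 1).1 = u.1 + h0 m from rfl, h2, h0_add_h0 hm, add_zero, hx]
        rw [hval]
      · rintro e ⟨⟨hedge, hcol⟩, hue⟩
        obtain ⟨v, rfl⟩ := Sym2.mem_iff_exists.1 hue
        rw [SimpleGraph.mem_edgeSet] at hedge
        have hadj : u.1 ≠ v.1 := hedge
        rw [col_mk, colFun] at hcol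
        split_ifs at hcol with h1 h2 h3
        · exact absurd (show u.1 = v.1 by linear_combination hx - Sum.inl.inj hcol) hadj
        · have hv1 : v.1 = u.1 + h0 m := by
            rcases h2 with h2 | h2
            · linear_combination h2
            · linear_combination -h2 + neg_h0 hm
          have hv : v = (u.1 + h0 m, u.2 + 1) := Prod.ext hv1 (zmod2_ne h1)
          rw [hv]
    · -- partner (w - u.1, u.2)
      refine ⟨s(u, (w - u.1, u.2)), ⟨⟨?_, ?_⟩, Sym2.mem_mk_left _ _⟩, ?_⟩
      · rw [SimpleGraph.mem_edgeSet, adj_iff]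
        intro h
        exact hx (by linear_combination h)
      · rw [col_mk, colFun, if_pos (show u.2 = (w - u.1, u.2).2 from rfl)]
        rw [show u.1 + (w - u.1, u.2).1 = w by ring]
      · rintro e ⟨⟨hedge, hcol⟩, hue⟩
        obtain ⟨v, rfl⟩ := Sym2.mem_iff_exists.1 hue
        rw [SimpleGraph.mem_edgeSet] at hedge
        have hadj : u.1 ≠ v.1 := hedge
        rw [col_mk, colFun] at hcol
        split_ifs at hcol with h1 h2 h3
        · have hval := Sum.inl.inj hcol
          have hv : v = (w - u.1, u.2) := Prod.ext (by linear_combination hval) h1.symm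
          rw [hv]
        · have hval := Sum.inl.inj hcol
          have hv1 : v.1 = u.1 + h0 m := by
            rcases h2 with h2 | h2
            · linear_combination h2
            · linear_combination -h2 + neg_h0 hm
          exact absurd (show u.1 + u.1 = w by linear_combination hval - hv1 - h0_add_h0 hm) hx
  · obtain ⟨hs0, hsh⟩ := hc s rfl
    have hnsh : -s ≠ h0 m := fun h => hsh (by linear_combination -h + neg_h0 hm)
    by_cases ht : u.2 = 0
    · -- partner (u.1 + s, 1)
      refine ⟨s(u, (u.1 + s, 1)), ⟨⟨?_, ?_⟩, Sym2.mem_mk_left _ _⟩, ?_⟩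
      · rw [SimpleGraph.mem_edgeSet, adj_iff]
        intro h
        exact hs0 (by linear_combination -h)
      · rw [col_mk, colFun, if_neg (show ¬u.2 = (u.1 + s, 1).2 from by rw [ht]; exact zmod2_zero_ne_one),
          if_neg (show ¬((u.1 + s, 1).1 - u.1 = h0 m ∨ u.1 - (u.1 + s, 1).1 = h0 m) from ?_),
          if_pos ht]
        · rw [show (u.1 + s, 1).1 - u.1 = s by ring]
        · rintro (h | h)
          · exact hsh (by linear_combination h)
          · exact hnsh (by linear_combination h)
      · rintro e ⟨⟨hedge, hcol⟩, hue⟩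
        obtain ⟨v, rfl⟩ := Sym2.mem_iff_exists.1 hue
        rw [SimpleGraph.mem_edgeSet] at hedge
        have hadj : u.1 ≠ v.1 := hedge
        rw [col_mk, colFun] at hcol
        split_ifs at hcol with h1 h2
        have hval := Sum.inr.inj hcol
        have hv2 : v.2 = 1 := by rw [zmod2_ne h1, ht]; exact zero_add 1
        have hv : v = (u.1 + s, 1) := Prod.ext (by linear_combination hval) hv2
        rw [hv]
    · -- u.2 = 1, partner (u.1 - s, 0)
      have ht1 : u.2 = 1 := (zmod2_cases u.2).resolve_left ht
      refine ⟨s(u, (u.1 - s, 0)), ⟨⟨?_, ?_⟩, Sym2.mem_mk_left _ _⟩, ?_⟩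
      · rw [SimpleGraph.mem_edgeSet, adj_iff]
        intro h
        exact hs0 (by linear_combination h)
      · rw [col_mk, colFun, if_neg (show ¬u.2 = (u.1 - s, 0).2 from by rw [ht1]; exact zmod2_one_ne_zero),
          if_neg (show ¬((u.1 - s, 0).1 - u.1 = h0 m ∨ u.1 - (u.1 - s, 0).1 = h0 m) from ?_),
          if_neg ht]
        · rw [show u.1 - (u.1 - s, 0).1 = s by ring]
        · rintro (h | h)
          · exact hnsh (by linear_combination h)
          · exact hsh (by linear_combination h)
      · rintro e ⟨⟨hedge, hcol⟩, hue⟩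
        obtain ⟨v, rfl⟩ := Sym2.mem_iff_exists.1 hue
        rw [SimpleGraph.mem_edgeSet] at hedge
        have hadj : u.1 ≠ v.1 := hedge
        rw [col_mk, colFun] at hcol
        split_ifs at hcol with h1 h2
        have hval := Sum.inr.inj hcol
        have hv2 : v.2 = 0 := by rw [zmod2_ne h1, ht1]; decide
        have hv : v = (u.1 - s, 0) := Prod.ext (by linear_combination -hval) hv2
        rw [hv]

def actC (m : ℕ) (a : V m) : ZMod m ⊕ ZMod m → ZMod m ⊕ ZMod m
  | Sum.inl w => Sum.inl (w + a.1 + a.1)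
  | Sum.inr s => if a.2 = 0 then Sum.inr s else Sum.inr (-s)

lemma actC_zero (m : ℕ) (c : ZMod m ⊕ ZMod m) : actC m 0 c = c := by
  rcases c with w | s
  · show Sum.inl (w + (0 : V m).1 + (0 : V m).1) = Sum.inl w
    rw [show ((0 : V m).1) = 0 from rfl, add_zero, add_zero]
  · show (if (0 : V m).2 = 0 then Sum.inr s else Sum.inr (-s)) = Sum.inr s
    rw [if_pos (show (0 : V m).2 = 0 from rfl)]

lemma actC_actC (m : ℕ) (a b : V m) (c : ZMod m ⊕ ZMod m) :
    actC m a (actC m b c) = actC m (a + b) c := by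
  rcases c with w | s
  · show Sum.inl (w + b.1 + b.1 + a.1 + a.1) = Sum.inl (w + (a + b).1 + (a + b).1)
    rw [show (a + b).1 = a.1 + b.1 from rfl]
    exact congrArg Sum.inl (by ring)
  · show actC m a (if b.2 = 0 then Sum.inr s else Sum.inr (-s)) =
      (if (a + b).2 = 0 then Sum.inr s else Sum.inr (-s))
    rw [show (a + b).2 = a.2 + b.2 from rfl]
    rcases zmod2_cases a.2 with ha | ha <;> rcases zmod2_cases b.2 with hb | hb <;> rw [ha, hb]
    · rw [if_pos (show (0 : ZMod 2) = 0 from rfl), if_pos (show (0 : ZMod 2) + 0 = 0 by decide)]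
      show (if a.2 = 0 then Sum.inr s else Sum.inr (-s)) = Sum.inr s
      rw [if_pos ha]
    · rw [if_neg (show ¬(1 : ZMod 2) = 0 by decide), if_neg (show ¬(0 : ZMod 2) + 1 = 0 by decide)]
      show (if a.2 = 0 then Sum.inr (-s) else Sum.inr (- -s)) = Sum.inr (-s)
      rw [if_pos ha]
    · rw [if_pos (show (0 : ZMod 2) = 0 from rfl), if_neg (show ¬(1 : ZMod 2) + 0 = 0 by decide)]
      show (if a.2 = 0 then Sum.inr s else Sum.inr (-s)) = Sum.inr (-s)
      rw [if_neg (show ¬a.2 = 0 by rw [ha]; decide)]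
    · rw [if_neg (show ¬(1 : ZMod 2) = 0 by decide), if_pos (show (1 : ZMod 2) + 1 = 0 by decide)]
      show (if a.2 = 0 then Sum.inr (-s) else Sum.inr (- -s)) = Sum.inr s
      rw [if_neg (show ¬a.2 = 0 by rw [ha]; decide), neg_neg]

lemma colFun_translate (m : ℕ) (a u v : V m) :
    colFun m (a + u) (a + v) = actC m a (colFun m u v) := by
  obtain ⟨g, k⟩ := a
  obtain ⟨x, t⟩ := u
  obtain ⟨y, r⟩ := v
  show colFun m (g + x, k + t) (g + y, k + r) = _
  unfold colFun
  by_cases h1 : t = r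
  · rw [if_pos (show ((g + x, k + t) : V m).2 = ((g + y, k + r) : V m).2 by
      show k + t = k + r; rw [h1]), if_pos (show t = r from h1)]
    show _ = Sum.inl (x + y + g + g)
    exact congrArg Sum.inl (by show g + x + (g + y) = _; ring)
  · rw [if_neg (show ¬((g + x, k + t) : V m).2 = ((g + y, k + r) : V m).2 from
      fun h => h1 (add_left_cancel (show k + t = k + r from h))), if_neg h1]
    rw [show ((g + y, k + r) : V m).1 - ((g + x, k + t) : V m).1 = y - x by
      show g + y - (g + x) = y - x; ring,
      show ((g + x, k + t) : V m).1 - ((g + y, k + r) : V m).1 = x - y by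
      show g + x - (g + y) = x - y; ring]
    by_cases h2 : (y - x = h0 m ∨ x - y = h0 m)
    · rw [if_pos h2, if_pos h2]
      show _ = Sum.inl (x + y + h0 m + g + g)
      exact congrArg Sum.inl (by show g + x + (g + y) + h0 m = _; ring)
    · rw [if_neg h2, if_neg h2]
      rcases zmod2_cases k with hk | hk <;> subst hk <;> rcases zmod2_cases t with ht | ht <;>
        subst ht
      · rw [if_pos (show ((g + x, (0 : ZMod 2) + 0) : V m).2 = 0 from
            (by decide : ((0 : ZMod 2) + 0 = 0))), if_pos (show (0 : ZMod 2) = 0 from rfl)]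
        show _ = if (0 : ZMod 2) = 0 then Sum.inr (y - x) else Sum.inr (-(y - x))
        rw [if_pos (show (0 : ZMod 2) = 0 from rfl)]
      · rw [if_neg (show ¬((g + x, (0 : ZMod 2) + 1) : V m).2 = 0 from
            fun h => (by decide : ¬((0 : ZMod 2) + 1 = 0)) h),
          if_neg (show ¬(1 : ZMod 2) = 0 by decide)]
        show _ = if (0 : ZMod 2) = 0 then Sum.inr (x - y) else Sum.inr (-(x - y))
        rw [if_pos (show (0 : ZMod 2) = 0 from rfl)]
      · rw [if_neg (show ¬((g + x, (1 : ZMod 2) + 0) : V m).2 = 0 from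
            fun h => (by decide : ¬((1 : ZMod 2) + 0 = 0)) h),
          if_pos (show (0 : ZMod 2) = 0 from rfl)]
        show _ = if (1 : ZMod 2) = 0 then Sum.inr (y - x) else Sum.inr (-(y - x))
        rw [if_neg (show ¬(1 : ZMod 2) = 0 by decide)]
        exact congrArg Sum.inr (by ring)
      · rw [if_pos (show ((g + x, (1 : ZMod 2) + 1) : V m).2 = 0 from
            (by decide : ((1 : ZMod 2) + 1 = 0))),
          if_neg (show ¬(1 : ZMod 2) = 0 by decide)]
        show _ = if (1 : ZMod 2) = 0 then Sum.inr (x - y) else Sum.inr (-(x - y))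
        rw [if_neg (show ¬(1 : ZMod 2) = 0 by decide)]
        exact congrArg Sum.inr (by ring)

lemma col_inr_cond {m : ℕ} {e : Sym2 (V m)} (he : e ∈ (graph m).edgeSet) :
    ∀ s, col m e = Sum.inr s → s ≠ 0 ∧ s ≠ h0 m := by
  induction e using Sym2.inductionOn with
  | hf u v =>
    intro s hcol
    rw [SimpleGraph.mem_edgeSet] at he
    have hadj : u.1 ≠ v.1 := he
    rw [col_mk, colFun] at hcol
    split_ifs at hcol with h1 h2 h3
    · have := Sum.inr.inj hcol
      subst this
      refine ⟨fun h => hadj ?_, fun h => h2 (Or.inl h)⟩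
      · have := sub_eq_zero.mp h
        exact this.symm
    · have := Sum.inr.inj hcol
      subst this
      refine ⟨fun h => hadj ?_, fun h => h2 (Or.inr h)⟩
      · exact sub_eq_zero.mp h

def translate (m : ℕ) (a : V m) : Equiv.Perm (V m) := Equiv.addLeft a

def phi (m : ℕ) : Multiplicative (V m) →* Equiv.Perm (V m) where
  toFun a := Equiv.addLeft a.toAdd
  map_one' := by
    refine Equiv.ext fun x => ?_
    show (1 : Multiplicative (V m)).toAdd + x = x
    rw [show (1 : Multiplicative (V m)).toAdd = 0 from rfl, zero_add]
  map_mul' a b := by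
    refine Equiv.ext fun x => ?_
    show (a * b).toAdd + x = a.toAdd + (b.toAdd + x)
    rw [toAdd_mul, add_assoc]

lemma phi_apply (m : ℕ) (a : Multiplicative (V m)) (x : V m) : phi m a x = a.toAdd + x := rfl

lemma edge_translate {m : ℕ} (a : V m) {e : Sym2 (V m)} (he : e ∈ (graph m).edgeSet) :
    Sym2.map (fun x => a + x) e ∈ (graph m).edgeSet := by
  induction e using Sym2.inductionOn with
  | hf u v =>
    rw [Sym2.map_pair_eq, SimpleGraph.mem_edgeSet] at *
    intro h
    exact he (show u.1 = v.1 from by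
      have : a.1 + u.1 = a.1 + v.1 := h
      exact add_left_cancel this)

lemma col_translate {m : ℕ} (a : V m) (e : Sym2 (V m)) :
    col m (Sym2.map (fun x => a + x) e) = actC m a (col m e) := by
  induction e using Sym2.inductionOn with
  | hf u v => rw [Sym2.map_pair_eq, col_mk, col_mk, colFun_translate]

lemma map_map_translate {m : ℕ} (a : V m) (e : Sym2 (V m)) :
    Sym2.map (fun x => a + x) (Sym2.map (fun x => -a + x) e) = e := by
  rw [Sym2.map_map]
  have : ((fun x => a + x) ∘ fun x : V m => -a + x) = id := funext fun x => by
    show a + (-a + x) = x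
    rw [← add_assoc, add_neg_cancel, zero_add]
  rw [this, Sym2.map_id, id]

lemma cls_translate {m : ℕ} (a : V m) (c : ZMod m ⊕ ZMod m) :
    Sym2.map (fun x => a + x) '' cls m c = cls m (actC m a c) := by
  ext e
  constructor
  · rintro ⟨e', ⟨hE, hcol⟩, rfl⟩
    exact ⟨edge_translate a hE, by rw [col_translate, hcol]⟩
  · rintro ⟨hE, hcol⟩
    refine ⟨Sym2.map (fun x => -a + x) e, ⟨edge_translate (-a) hE, ?_⟩, map_map_translate a e⟩
    rw [col_translate, hcol, actC_actC, neg_add_cancel, actC_zero]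

def Fam (m : ℕ) : Set (Set (Sym2 (V m))) :=
  {M | ∃ e ∈ (graph m).edgeSet, M = cls m (col m e)}

theorem mainZ (m : ℕ) (hm : Even m) (hpos : 0 < m) :
    HasRegularOneFactorization (graph m) (Multiplicative (V m)) := by
  refine ⟨phi m, Fam m, ⟨⟨?_, ?_⟩, ?_, ?_, ?_⟩⟩
  · -- every member is a one-factor
    rintro M ⟨e, he, rfl⟩
    exact ⟨fun e' he' => he'.1, matching hm hpos (col m e) (col_inr_cond he)⟩
  · -- every edge in exactly one member
    intro e he
    refine ⟨cls m (col m e), ⟨⟨e, he, rfl⟩, ⟨he, rfl⟩⟩, ?_⟩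
    rintro M ⟨⟨e', _, rfl⟩, _, hcol⟩
    rw [hcol]
  · -- automorphisms
    intro a u v
    rw [phi_apply, phi_apply, adj_iff, adj_iff]
    constructor
    · intro h hh
      exact h (show (a.toAdd + u).1 = (a.toAdd + v).1 from by
        show a.toAdd.1 + u.1 = a.toAdd.1 + v.1
        rw [hh])
    · intro h hh
      exact h (add_left_cancel (show a.toAdd.1 + u.1 = a.toAdd.1 + v.1 from hh))
  · -- maps factors to factors
    rintro a M ⟨e, he, rfl⟩
    have hfn : ⇑(phi m a) = fun x => a.toAdd + x := rfl
    rw [hfn, cls_translate, ← col_translate]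
    exact ⟨Sym2.map (fun x => a.toAdd + x) e, edge_translate a.toAdd he, rfl⟩
  · -- sharp transitivity
    intro u v
    refine ⟨Multiplicative.ofAdd (v - u), ?_, ?_⟩
    · show v - u + u = v
      abel
    · intro b hb
      rw [phi_apply] at hb
      have : b.toAdd = v - u := by rw [← hb]; abel
      exact this

lemma map_symm_map {W W' : Type*} (e : W ≃ W') (z : Sym2 W) :
    Sym2.map (⇑e.symm) (Sym2.map (⇑e) z) = z := by
  rw [Sym2.map_map]
  have h : (⇑e.symm ∘ ⇑e) = id := funext fun x => e.symm_apply_apply x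
  rw [h, Sym2.map_id, id]

lemma map_map_symm {W W' : Type*} (e : W ≃ W') (z : Sym2 W') :
    Sym2.map (⇑e) (Sym2.map (⇑e.symm) z) = z := by
  rw [Sym2.map_map]
  have h : (⇑e ∘ ⇑e.symm) = id := funext fun x => e.apply_symm_apply x
  rw [h, Sym2.map_id, id]

lemma mem_map_symm {W W' : Type*} (e : W ≃ W') (z : Sym2 W') (v : W) :
    v ∈ Sym2.map (⇑e.symm) z ↔ e v ∈ z := by
  rw [Sym2.mem_map]
  constructor
  · rintro ⟨a, ha, rfl⟩
    rwa [e.apply_symm_apply]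
  · intro h
    exact ⟨e v, h, e.symm_apply_apply v⟩

lemma transport {W W' : Type*} (e : W ≃ W') (Γ : SimpleGraph W) (Γ' : SimpleGraph W')
    (hadj : ∀ u v, Γ.Adj u v ↔ Γ'.Adj (e u) (e v)) (A : Type*) [Group A]
    (h : HasRegularOneFactorization Γ' A) : HasRegularOneFactorization Γ A := by
  obtain ⟨φ', F', ⟨⟨hfac, hcover⟩, hauto, hmaps, hsharp⟩⟩ := h
  have hedge : ∀ z : Sym2 W, z ∈ Γ.edgeSet ↔ Sym2.map (⇑e) z ∈ Γ'.edgeSet := by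
    intro z
    induction z using Sym2.inductionOn with
    | hf u v => rw [Sym2.map_pair_eq, SimpleGraph.mem_edgeSet, SimpleGraph.mem_edgeSet]; exact hadj u v
  have hedge' : ∀ z : Sym2 W', z ∈ Γ'.edgeSet → Sym2.map (⇑e.symm) z ∈ Γ.edgeSet := by
    intro z hz
    rw [hedge, map_map_symm]
    exact hz
  refine ⟨{ toFun := fun a => (e.trans (φ' a)).trans e.symm,
            map_one' := Equiv.ext fun x => by simp,
            map_mul' := fun a b => Equiv.ext fun x => by simp },
          (fun M => Sym2.map (⇑e.symm) '' M) '' F', ⟨⟨?_, ?_⟩, ?_, ?_, ?_⟩⟩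
  · rintro M ⟨M', hM', rfl⟩
    obtain ⟨hsub, hmat⟩ := hfac M' hM'
    constructor
    · rintro z ⟨z', hz', rfl⟩
      exact hedge' z' (hsub hz')
    · intro w
      obtain ⟨z, ⟨hzM, hzmem⟩, huniq⟩ := hmat (e w)
      refine ⟨Sym2.map (⇑e.symm) z, ⟨⟨z, hzM, rfl⟩, (mem_map_symm e z w).2 hzmem⟩, ?_⟩
      rintro y ⟨⟨z₂, hz₂, rfl⟩, hy⟩
      rw [huniq z₂ ⟨hz₂, (mem_map_symm e z₂ w).1 hy⟩]
  · intro z hz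
    obtain ⟨M', ⟨hM', hzM'⟩, huniq⟩ := hcover (Sym2.map (⇑e) z) ((hedge z).1 hz)
    refine ⟨Sym2.map (⇑e.symm) '' M', ⟨⟨M', hM', rfl⟩, ?_⟩, ?_⟩
    · exact ⟨Sym2.map (⇑e) z, hzM', map_symm_map e z⟩
    · rintro N ⟨⟨M₂, hM₂, rfl⟩, hzN⟩
      have : Sym2.map (⇑e) z ∈ M₂ := by
        obtain ⟨z₂, hz₂, hz₂'⟩ := hzN
        rwa [← hz₂', map_map_symm]
      rw [huniq M₂ ⟨hM₂, this⟩]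
  · intro a u v
    have h1 : ∀ x, ((e.trans (φ' a)).trans e.symm) x = e.symm (φ' a (e x)) := fun _ => rfl
    rw [MonoidHom.coe_mk, OneHom.coe_mk, h1, h1, hadj, e.apply_symm_apply, e.apply_symm_apply,
      hauto, ← hadj]
  · rintro a M ⟨M', hM', rfl⟩
    have hcomp : ∀ z : Sym2 W',
        Sym2.map (⇑((e.trans (φ' a)).trans e.symm)) (Sym2.map (⇑e.symm) z)
          = Sym2.map (⇑e.symm) (Sym2.map (⇑(φ' a)) z) := by
      intro z
      rw [Sym2.map_map, Sym2.map_map]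
      congr 1
      funext x
      show e.symm (φ' a (e (e.symm x))) = e.symm (φ' a x)
      rw [e.apply_symm_apply]
    rw [MonoidHom.coe_mk, OneHom.coe_mk, Set.image_image]
    have : (fun z => Sym2.map (⇑((e.trans (φ' a)).trans e.symm)) (Sym2.map (⇑e.symm) z)) '' M'
        = (fun z => Sym2.map (⇑e.symm) (Sym2.map (⇑(φ' a)) z)) '' M' := by
      apply Set.image_congr
      intro z _
      exact hcomp z
    rw [this]
    refine ⟨Sym2.map (⇑(φ' a)) '' M', hmaps a M' hM', ?_⟩
    show Sym2.map (⇑e.symm) '' (Sym2.map (⇑(φ' a)) '' M') = _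
    rw [Set.image_image]
  · intro u v
    obtain ⟨a, ha, huniq⟩ := hsharp (e u) (e v)
    refine ⟨a, ?_, ?_⟩
    · show e.symm (φ' a (e u)) = v
      rw [ha, e.symm_apply_apply]
    · intro b hb
      have hb' : e.symm (φ' b (e u)) = v := hb
      apply huniq
      rw [← e.apply_symm_apply (φ' b (e u)), hb']

def finZmodEquiv (n : ℕ) [NeZero n] : Fin n ≃ ZMod n where
  toFun i := ((i : ℕ) : ZMod n)
  invFun x := ⟨x.val, x.val_lt⟩
  left_inv i := by
    apply Fin.ext
    show ((((i : ℕ) : ZMod n)).val) = (i : ℕ)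
    rw [ZMod.val_natCast, Nat.mod_eq_of_lt i.isLt]
  right_inv x := ZMod.natCast_rightInverse x

lemma even_m (v d : ℕ) (hv : 1 ≤ v) : Even (2 ^ v * d) := by
  rcases Nat.exists_eq_add_of_le hv with ⟨k, hk⟩
  exact ⟨2 ^ k * d, by subst hk; rw [pow_add, pow_one]; ring⟩

lemma pos_m (v d : ℕ) (hd : Odd d) : 0 < 2 ^ v * d := by
  rcases hd with ⟨k, hk⟩
  have : 0 < d := by omega
  positivity

end AOFB

/-- For `m = 2^v d`, `v ≥ 1`, `d` odd, `K_{m×2}` has a 1-factorization with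
`C_m × Z_2` acting sharply transitively on the vertices. -/
theorem abelian_oneFactorization_bipartition_two (v d : ℕ) (hv : 1 ≤ v) (hd : Odd d) :
    HasRegularOneFactorization (completeMultipartite (2 ^ v * d) 2)
      (Multiplicative (ZMod (2 ^ v * d) × ZMod 2)) := by
  have hm : Even (2 ^ v * d) := AOFB.even_m v d hv
  have hpos : 0 < 2 ^ v * d := AOFB.pos_m v d hd
  haveI : NeZero (2 ^ v * d) := ⟨hpos.ne'⟩
  let e : Fin (2 ^ v * d) × Fin 2 ≃ AOFB.V (2 ^ v * d) :=
    Equiv.prodCongr (AOFB.finZmodEquiv (2 ^ v * d)) (AOFB.finZmodEquiv 2)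
  refine AOFB.transport e (completeMultipartite (2 ^ v * d) 2) (AOFB.graph (2 ^ v * d)) ?_ _
    (AOFB.mainZ (2 ^ v * d) hm hpos)
  intro u w
  show u.1 ≠ w.1 ↔ (e u).1 ≠ (e w).1
  have h1 : (e u).1 = AOFB.finZmodEquiv (2 ^ v * d) u.1 := rfl
  have h2 : (e w).1 = AOFB.finZmodEquiv (2 ^ v * d) w.1 := rfl
  rw [h1, h2]
  exact ((AOFB.finZmodEquiv (2 ^ v * d)).injective.ne_iff).symm
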